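/- In a Shapley-Scarf market with an objective indifferences domain R(H) induced by a partition 𝓗 of the houses, every TTC-with-fixed-tie-breaking mechanism TTC_≻ is Pareto efficient: for every preference profile R in R(𝓗)^n, there is no allocation y with y_i R_i TTC_≻(R)_i for all agents i and y_i P_i TTC_≻(R)_i for some agent i. -/

import Mathlib

open scoped Classical

namespace ShapleyScarf

/-- A weak preference relation: complete (total) and transitive, hence reflexive. -/
structure WeakOrder (H : Type*) where
  rel : H → H → Prop
  total : ∀ a b, rel a b ∨ rel b a
  trans : ∀ a b c, rel a b → rel b c → rel a c

namespace WeakOrder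
variable {H : Type*}
/-- Strict part `P` of a weak preference. -/
def P (R : WeakOrder H) (a b : H) : Prop := R.rel a b ∧ ¬ R.rel b a
/-- Indifference part `I` of a weak preference. -/
def I (R : WeakOrder H) (a b : H) : Prop := R.rel a b ∧ R.rel b a
end WeakOrder

/-- `lt` is a strict linear order on agents (a tie-breaking order). -/
def IsTieBreak {n : ℕ} (lt : Fin n → Fin n → Prop) : Prop :=
  (∀ a b, a ≠ b → lt a b ∨ lt b a) ∧ Transitive lt ∧ ∀ a, ¬ lt a a

section Defs
variable {n : ℕ} {H : Type*} {B : Type*}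

/-- Strict part of the tie-broken preference `P_{i,≻}`: `a` above `b` iff
`a P b`, or `a I b` and the owner of `a` comes before the owner of `b` in `≻_i`. -/
def tieBroken (w : Fin n ≃ H) (R : WeakOrder H) (lt : Fin n → Fin n → Prop) (a b : H) : Prop :=
  R.P a b ∨ (R.I a b ∧ lt (w.symm a) (w.symm b))

/-- The weak tie-broken relation `R_{i,≻}` (reflexive closure of the strict part). -/
def tieBrokenWeak (w : Fin n ≃ H) (R : WeakOrder H) (lt : Fin n → Fin n → Prop)
    (a b : H) : Prop :=
  a = b ∨ tieBroken w R lt a b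

/-- The owner (in `S`) of the `pref`-best house among the endowments of the
remaining agents `S`; the agent with this endowment is whom `i` points at. -/
noncomputable def point (w : Fin n ≃ H) (pref : H → H → Prop) (S : Finset (Fin n))
    (i : Fin n) : Fin n :=
  if h : (S.filter fun m => ∀ j ∈ S, j = m ∨ pref (w m) (w j)).Nonempty then
    (S.filter fun m => ∀ j ∈ S, j = m ∨ pref (w m) (w j)).min' h
  else i

/-- The agents of `S` lying on some trading cycle of the pointing map. -/
noncomputable def cycleAgents (w : Fin n ≃ H) (pref : Fin n → H → H → Prop)
    (S : Finset (Fin n)) : Finset (Fin n) :=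
  S.filter fun i => ∃ k, 0 < k ∧ (fun j => point w (pref j) S j)^[k] i = i

/-- Top trading cycles on strict preferences, fuel-based recursion: in each round all
current trading cycles are executed and their agents removed. -/
noncomputable def TTCaux (w : Fin n ≃ H) (pref : Fin n → H → H → Prop) :
    ℕ → Finset (Fin n) → Fin n → H
  | 0, _, i => w i
  | fuel + 1, S, i =>
      if i ∈ cycleAgents w pref S then w (point w (pref i) S i)
      else TTCaux w pref fuel (S \ cycleAgents w pref S) i

/-- Gale's top trading cycles algorithm for a strict preference profile. -/
noncomputable def TTCstrict (w : Fin n ≃ H) (pref : Fin n → H → H → Prop) : Fin n → H :=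
  TTCaux w pref n Finset.univ

/-- Round (executed-cycle index, starting from 1) at which an agent is assigned. -/
noncomputable def TTCroundAux (w : Fin n ≃ H) (pref : Fin n → H → H → Prop) :
    ℕ → Finset (Fin n) → Fin n → ℕ
  | 0, _, _ => 1
  | fuel + 1, S, i =>
      if i ∈ cycleAgents w pref S then 1
      else TTCroundAux w pref fuel (S \ cycleAgents w pref S) i + 1

/-- TTC with fixed tie-breaking: `TTC_≻(R) = TTC(R_≻)`. -/
noncomputable def TTCtb (w : Fin n ≃ H) (R : Fin n → WeakOrder H)
    (tb : Fin n → Fin n → Fin n → Prop) : Fin n → H :=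
  TTCstrict w fun i => tieBroken w (R i) (tb i)

/-- The round in which agent `i` is assigned under `TTC_≻(R)`. -/
noncomputable def TTCtbRound (w : Fin n ≃ H) (R : Fin n → WeakOrder H)
    (tb : Fin n → Fin n → Fin n → Prop) (i : Fin n) : ℕ :=
  TTCroundAux w (fun a => tieBroken w (R a) (tb a)) n Finset.univ i

/-- Objective indifferences w.r.t. the partition of `H` into the fibers of `blk`:
indifference holds exactly between houses in the same block. -/
def ObjInd (blk : H → B) (R : WeakOrder H) : Prop :=
  ∀ a b, R.I a b ↔ blk a = blk b

/-- `x` is blocked: some coalition `Q` can reallocate its own endowments making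
all its members weakly better off and one strictly better off. -/
def Blocks (w : Fin n ≃ H) (R : Fin n → WeakOrder H) (x : Fin n → H) : Prop :=
  ∃ (Q : Finset (Fin n)) (y : Fin n ≃ H),
    Q.image (⇑y) = Q.image (⇑w) ∧
    (∀ i ∈ Q, (R i).rel (y i) (x i)) ∧
    ∃ i ∈ Q, (R i).P (y i) (x i)

/-- `x` is weakly blocked: some nonempty coalition can reallocate its own
endowments making all of its members strictly better off. -/
def WeaklyBlocks (w : Fin n ≃ H) (R : Fin n → WeakOrder H) (x : Fin n → H) : Prop :=
  ∃ Q : Finset (Fin n), Q.Nonempty ∧ ∃ y : Fin n ≃ H,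
    Q.image (⇑y) = Q.image (⇑w) ∧ ∀ i ∈ Q, (R i).P (y i) (x i)

/-- `y` Pareto dominates `x`. -/
def ParetoDom (R : Fin n → WeakOrder H) (y x : Fin n → H) : Prop :=
  (∀ i, (R i).rel (y i) (x i)) ∧ ∃ i, (R i).P (y i) (x i)

end Defs

section Lemmas
variable {n : ℕ} {H : Type*} (w : Fin n ≃ H) (pref : Fin n → H → H → Prop)

lemma exists_top (p : H → H → Prop) (hp : Transitive p)
    (ht : ∀ a b : H, a ≠ b → p a b ∨ p b a) :
    ∀ S : Finset (Fin n), S.Nonempty → ∃ m ∈ S, ∀ j ∈ S, j = m ∨ p (w m) (w j) := by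
  intro S
  induction S using Finset.cons_induction with
  | empty => intro h; simp at h
  | cons a S ha ih =>
    intro _
    rcases S.eq_empty_or_nonempty with rfl | hS
    · exact ⟨a, Finset.mem_cons_self a _, by intro j hj; left; simpa using hj⟩
    · obtain ⟨m, hm, hmax⟩ := ih hS
      by_cases hc : p (w a) (w m)
      · refine ⟨a, Finset.mem_cons_self a _, ?_⟩
        intro j hj
        rcases Finset.mem_cons.mp hj with rfl | hj
        · exact Or.inl rfl
        · rcases hmax j hj with rfl | h
          · exact Or.inr hc
          · exact Or.inr (hp hc h)
      · have hne : w m ≠ w a := fun h => ha (w.injective h ▸ hm)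
        have hma : p (w m) (w a) := (ht _ _ hne).resolve_right hc
        refine ⟨m, Finset.mem_cons_of_mem hm, ?_⟩
        intro j hj
        rcases Finset.mem_cons.mp hj with rfl | hj
        · exact Or.inr hma
        · exact hmax j hj

variable (hp : ∀ i, Transitive (pref i)) (hirr : ∀ i a, ¬ pref i a a)
  (ht : ∀ i (a b : H), a ≠ b → pref i a b ∨ pref i b a)

include hp ht

lemma filter_nonempty' (S : Finset (Fin n)) (hS : S.Nonempty) (i : Fin n) :
    (S.filter fun m => ∀ j ∈ S, j = m ∨ pref i (w m) (w j)).Nonempty := by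
  obtain ⟨m, hm, h⟩ := exists_top w (pref i) (hp i) (ht i) S hS
  exact ⟨m, Finset.mem_filter.mpr ⟨hm, h⟩⟩

lemma point_mem (S : Finset (Fin n)) (hS : S.Nonempty) (i : Fin n) :
    point w (pref i) S i ∈ S := by
  unfold point
  rw [dif_pos (filter_nonempty' w pref hp ht S hS i)]
  exact Finset.filter_subset _ _ (Finset.min'_mem _ _)

lemma point_spec (S : Finset (Fin n)) (hS : S.Nonempty) (i : Fin n) :
    ∀ j ∈ S, j = point w (pref i) S i ∨ pref i (w (point w (pref i) S i)) (w j) := by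
  unfold point
  rw [dif_pos (filter_nonempty' w pref hp ht S hS i)]
  exact (Finset.mem_filter.mp (Finset.min'_mem _ (filter_nonempty' w pref hp ht S hS i))).2

lemma iter_mem (S : Finset (Fin n)) (hS : S.Nonempty) (i : Fin n) (hi : i ∈ S) (k : ℕ) :
    (fun j => point w (pref j) S j)^[k] i ∈ S := by
  induction k with
  | zero => simpa using hi
  | succ k ihk =>
    rw [Function.iterate_succ_apply']
    exact point_mem w pref hp ht S hS _

lemma cycleAgents_nonempty (S : Finset (Fin n)) (hS : S.Nonempty) :
    (cycleAgents w pref S).Nonempty := by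
  obtain ⟨i, hi⟩ := hS
  set f := fun j => point w (pref j) S j with hf
  have key : ∀ k l : ℕ, k < l → f^[k] i = f^[l] i → (cycleAgents w pref S).Nonempty := by
    intro k l hkl heq
    refine ⟨f^[k] i, Finset.mem_filter.mpr ⟨iter_mem w pref hp ht S ⟨i, hi⟩ i hi k, ⟨l - k, by omega, ?_⟩⟩⟩
    show f^[l-k] (f^[k] i) = f^[k] i
    rw [← Function.iterate_add_apply, Nat.sub_add_cancel hkl.le, ← heq]
  have hmap : ∀ k ∈ Finset.range (S.card + 1), f^[k] i ∈ S :=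
    fun k _ => iter_mem w pref hp ht S ⟨i, hi⟩ i hi k
  have hcard : S.card < (Finset.range (S.card + 1)).card := by simp
  obtain ⟨k, hk, l, hl, hkl, heq⟩ := Finset.exists_ne_map_eq_of_card_lt_of_maps_to hcard hmap
  rcases lt_or_gt_of_ne hkl with h | h
  · exact key k l h heq
  · exact key l k h heq.symm

lemma cycle_point_mem (S : Finset (Fin n)) {i : Fin n} (hi : i ∈ cycleAgents w pref S) :
    point w (pref i) S i ∈ cycleAgents w pref S := by
  obtain ⟨hiS, k, hk, hfix⟩ := Finset.mem_filter.mp hi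
  set f := fun j => point w (pref j) S j with hf
  refine Finset.mem_filter.mpr ⟨point_mem w pref hp ht S ⟨i, hiS⟩ i, k, hk, ?_⟩
  show f^[k] (f i) = f i
  rw [← Function.iterate_succ_apply, Function.iterate_succ_apply']
  show f (f^[k] i) = f i
  rw [hfix]

omit hp ht in
lemma point_injOn_cycle (S : Finset (Fin n)) :
    Set.InjOn (fun j => point w (pref j) S j) ↑(cycleAgents w pref S) := by
  intro i hi j hj hij
  obtain ⟨hiS, a, ha, hia⟩ := Finset.mem_filter.mp (Finset.mem_coe.mp hi)
  obtain ⟨hjS, b, hb, hjb⟩ := Finset.mem_filter.mp (Finset.mem_coe.mp hj)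
  set f := fun j => point w (pref j) S j with hf
  have hNi : f^[a*b] i = i := by
    rw [Function.iterate_mul]; exact Function.iterate_fixed hia b
  have hNj : f^[a*b] j = j := by
    rw [mul_comm, Function.iterate_mul]; exact Function.iterate_fixed hjb a
  have hab : a * b - 1 + 1 = a * b := by
    have : 1 ≤ a * b := Nat.one_le_iff_ne_zero.mpr (by positivity)
    omega
  have h1 : f^[a*b-1] (f i) = i := by
    rw [← Function.iterate_succ_apply]
    show f^[a*b-1+1] i = i
    rw [hab]; exact hNi
  have h2 : f^[a*b-1] (f j) = j := by
    rw [← Function.iterate_succ_apply]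
    show f^[a*b-1+1] j = j
    rw [hab]; exact hNj
  have : f i = f j := hij
  rw [← h1, this, h2]

lemma cycle_image (S : Finset (Fin n)) :
    (cycleAgents w pref S).image (fun j => point w (pref j) S j) = cycleAgents w pref S := by
  apply Finset.eq_of_subset_of_card_le
  · intro x hx
    obtain ⟨i, hi, rfl⟩ := Finset.mem_image.mp hx
    exact cycle_point_mem w pref hp ht S hi
  · rw [Finset.card_image_of_injOn (point_injOn_cycle w pref S)]


end Lemmas

section Lemmas2
variable {n : ℕ} {H : Type*} (w : Fin n ≃ H) (pref : Fin n → H → H → Prop)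
variable (hp : ∀ i, Transitive (pref i)) (hirr : ∀ i a, ¬ pref i a a)
  (ht : ∀ i (a b : H), a ≠ b → pref i a b ∨ pref i b a)

include hp ht

lemma TTCaux_bij : ∀ (fuel : ℕ) (S : Finset (Fin n)), S.card ≤ fuel →
    Set.InjOn (TTCaux w pref fuel S) ↑S ∧
    S.image (TTCaux w pref fuel S) = S.image ⇑w := by
  intro fuel
  induction fuel with
  | zero =>
    intro S hS
    have : S = ∅ := Finset.card_eq_zero.mp (Nat.le_zero.mp hS)
    subst this
    constructor
    · simp
    · simp
  | succ fuel ih =>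
    intro S hS
    rcases S.eq_empty_or_nonempty with rfl | hne
    · constructor
      · simp
      · simp
    · set C := cycleAgents w pref S with hC
      have hCne : C.Nonempty := cycleAgents_nonempty w pref hp ht S hne
      have hCS : C ⊆ S := Finset.filter_subset _ _
      have hcard' : (S \ C).card ≤ fuel := by
        have h1 := Finset.card_sdiff_of_subset hCS
        have h2 := Finset.card_pos.mpr hCne
        omega
      obtain ⟨ihinj, ihim⟩ := ih (S \ C) hcard'
      have hxC : ∀ i ∈ C, TTCaux w pref (fuel+1) S i = w (point w (pref i) S i) := by
        intro i hi; simp only [TTCaux, ← hC, if_pos hi]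
      have hxNC : ∀ i, i ∉ C → TTCaux w pref (fuel+1) S i = TTCaux w pref fuel (S \ C) i := by
        intro i hi; simp only [TTCaux, ← hC, if_neg hi]
      have himC : C.image (TTCaux w pref (fuel+1) S) = C.image ⇑w := by
        rw [Finset.image_congr (g := fun i => w (point w (pref i) S i)) (fun i hi => hxC i hi)]
        rw [show (C.image fun i => w (point w (pref i) S i)) =
            (C.image fun i => point w (pref i) S i).image ⇑w from
          (Finset.image_image).symm]
        rw [hC, cycle_image w pref hp ht]
      have himNC : (S \ C).image (TTCaux w pref (fuel+1) S) = (S \ C).image ⇑w := by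
        rw [Finset.image_congr (g := TTCaux w pref fuel (S \ C))
          (fun i hi => hxNC i (Finset.mem_sdiff.mp hi).2)]
        exact ihim
      have hsplit : C ∪ (S \ C) = S := Finset.union_sdiff_of_subset hCS
      constructor
      · intro i hi j hj hxy
        have hiS : i ∈ S := Finset.mem_coe.mp hi
        have hjS : j ∈ S := Finset.mem_coe.mp hj
        by_cases hiC : i ∈ C <;> by_cases hjC : j ∈ C
        · rw [hxC i hiC, hxC j hjC] at hxy
          exact point_injOn_cycle w pref S hiC hjC (w.injective hxy)
        · exfalso
          have h1 : TTCaux w pref (fuel+1) S i ∈ C.image ⇑w := by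
            rw [← himC]; exact Finset.mem_image_of_mem _ hiC
          have h2 : TTCaux w pref (fuel+1) S j ∈ (S \ C).image ⇑w := by
            rw [← himNC]
            exact Finset.mem_image_of_mem _ (Finset.mem_sdiff.mpr ⟨hjS, hjC⟩)
          rw [hxy] at h1
          obtain ⟨a, haC, hwa⟩ := Finset.mem_image.mp h1
          obtain ⟨b, hbC, hwb⟩ := Finset.mem_image.mp h2
          have : a = b := w.injective (hwa.trans hwb.symm)
          subst this
          exact (Finset.mem_sdiff.mp hbC).2 haC
        · exfalso
          have h1 : TTCaux w pref (fuel+1) S j ∈ C.image ⇑w := by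
            rw [← himC]; exact Finset.mem_image_of_mem _ hjC
          have h2 : TTCaux w pref (fuel+1) S i ∈ (S \ C).image ⇑w := by
            rw [← himNC]
            exact Finset.mem_image_of_mem _ (Finset.mem_sdiff.mpr ⟨hiS, hiC⟩)
          rw [← hxy] at h1
          obtain ⟨a, haC, hwa⟩ := Finset.mem_image.mp h1
          obtain ⟨b, hbC, hwb⟩ := Finset.mem_image.mp h2
          have : a = b := w.injective (hwa.trans hwb.symm)
          subst this
          exact (Finset.mem_sdiff.mp hbC).2 haC
        · have hi' : i ∈ ↑(S \ C) := Finset.mem_coe.mpr (Finset.mem_sdiff.mpr ⟨hiS, hiC⟩)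
          have hj' : j ∈ ↑(S \ C) := Finset.mem_coe.mpr (Finset.mem_sdiff.mpr ⟨hjS, hjC⟩)
          rw [hxNC i hiC, hxNC j hjC] at hxy
          exact ihinj hi' hj' hxy
      · calc S.image (TTCaux w pref (fuel+1) S)
            = (C ∪ (S \ C)).image (TTCaux w pref (fuel+1) S) := by rw [hsplit]
          _ = C.image (TTCaux w pref (fuel+1) S) ∪ (S \ C).image (TTCaux w pref (fuel+1) S) :=
              Finset.image_union _ _
          _ = C.image ⇑w ∪ (S \ C).image ⇑w := by rw [himC, himNC]
          _ = (C ∪ (S \ C)).image ⇑w := (Finset.image_union _ _).symm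
          _ = S.image ⇑w := by rw [hsplit]


include hirr in
lemma TTCaux_opt : ∀ (fuel : ℕ) (S : Finset (Fin n)), S.card ≤ fuel → ∀ y : Fin n → H,
    Set.InjOn y ↑S → S.image y = S.image ⇑w →
    (∀ i ∈ S, y i = TTCaux w pref fuel S i ∨ pref i (y i) (TTCaux w pref fuel S i)) →
    ∀ i ∈ S, y i = TTCaux w pref fuel S i := by
  intro fuel
  induction fuel with
  | zero =>
    intro S hS
    have : S = ∅ := Finset.card_eq_zero.mp (Nat.le_zero.mp hS)
    subst this
    intro y _ _ _ i hi
    simp at hi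
  | succ fuel ih =>
    intro S hS y hyinj hyim hyp
    rcases S.eq_empty_or_nonempty with rfl | hne
    · intro i hi; simp at hi
    · set C := cycleAgents w pref S with hC
      have hCne : C.Nonempty := cycleAgents_nonempty w pref hp ht S hne
      have hCS : C ⊆ S := Finset.filter_subset _ _
      have hcard' : (S \ C).card ≤ fuel := by
        have h1 := Finset.card_sdiff_of_subset hCS
        have h2 := Finset.card_pos.mpr hCne
        omega
      have hxC : ∀ i ∈ C, TTCaux w pref (fuel+1) S i = w (point w (pref i) S i) := by
        intro i hi; simp only [TTCaux, ← hC, if_pos hi]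
      have hxNC : ∀ i, i ∉ C → TTCaux w pref (fuel+1) S i = TTCaux w pref fuel (S \ C) i := by
        intro i hi; simp only [TTCaux, ← hC, if_neg hi]
      -- Step 1: agents on cycles get their assignment under y as well
      have hyC : ∀ i ∈ C, y i = TTCaux w pref (fuel+1) S i := by
        intro i hiC
        have hiS : i ∈ S := hCS hiC
        rcases hyp i hiS with h | h
        · exact h
        · exfalso
          have hyiS : y i ∈ S.image ⇑w := hyim ▸ Finset.mem_image_of_mem y hiS
          obtain ⟨m, hm, hmy⟩ := Finset.mem_image.mp hyiS
          rcases point_spec w pref hp ht S hne i m hm with heq | hpm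
          · rw [hxC i hiC, ← heq, hmy] at h
            exact hirr i _ h
          · rw [hmy] at hpm
            rw [hxC i hiC] at h
            exact hirr i _ (hp i h hpm)
      -- Step 2: images over C agree
      have himC : C.image (TTCaux w pref (fuel+1) S) = C.image ⇑w := by
        rw [Finset.image_congr (g := fun i => w (point w (pref i) S i)) (fun i hi => hxC i hi)]
        rw [show (C.image fun i => w (point w (pref i) S i)) =
            (C.image fun i => point w (pref i) S i).image ⇑w from
          (Finset.image_image).symm]
        rw [hC, cycle_image w pref hp ht]
      have hyCim : C.image y = C.image ⇑w := by
        rw [Finset.image_congr (g := TTCaux w pref (fuel+1) S) (fun i hi => hyC i hi)]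
        exact himC
      -- Step 3: images over S \ C agree
      have hdisjy : Disjoint (C.image y) ((S \ C).image y) := by
        rw [Finset.disjoint_left]
        intro a ha1 ha2
        obtain ⟨i, hi, hiy⟩ := Finset.mem_image.mp ha1
        obtain ⟨j, hj, hjy⟩ := Finset.mem_image.mp ha2
        have : i = j := hyinj (Finset.mem_coe.mpr (hCS hi))
          (Finset.mem_coe.mpr (Finset.mem_sdiff.mp hj).1) (hiy.trans hjy.symm)
        subst this
        exact (Finset.mem_sdiff.mp hj).2 hi
      have hdisjw : Disjoint (C.image ⇑w) ((S \ C).image ⇑w) := by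
        rw [Finset.disjoint_left]
        intro a ha1 ha2
        obtain ⟨i, hi, hiy⟩ := Finset.mem_image.mp ha1
        obtain ⟨j, hj, hjy⟩ := Finset.mem_image.mp ha2
        have : i = j := w.injective (hiy.trans hjy.symm)
        subst this
        exact (Finset.mem_sdiff.mp hj).2 hi
      have hsplit : C ∪ (S \ C) = S := Finset.union_sdiff_of_subset hCS
      have hunion : C.image y ∪ (S \ C).image y = C.image ⇑w ∪ (S \ C).image ⇑w := by
        rw [← Finset.image_union, ← Finset.image_union, hsplit]
        exact hyim
      have him' : (S \ C).image y = (S \ C).image ⇑w := by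
        calc (S \ C).image y
            = (C.image y ∪ (S \ C).image y) \ C.image y :=
              (Finset.union_sdiff_cancel_left hdisjy).symm
          _ = (C.image ⇑w ∪ (S \ C).image ⇑w) \ C.image ⇑w := by rw [hunion, hyCim]
          _ = (S \ C).image ⇑w := Finset.union_sdiff_cancel_left hdisjw
      -- Step 4: apply IH on S \ C
      have hyNC : ∀ i ∈ S \ C, y i = TTCaux w pref fuel (S \ C) i := by
        have hsub : (↑(S \ C) : Set (Fin n)) ⊆ ↑S := by
          intro a ha
          exact Finset.mem_coe.mpr (Finset.mem_sdiff.mp (Finset.mem_coe.mp ha)).1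
        apply ih (S \ C) hcard' y (hyinj.mono hsub) him'
        intro i hi
        rw [← hxNC i (Finset.mem_sdiff.mp hi).2]
        exact hyp i (Finset.mem_sdiff.mp hi).1
      intro i hiS
      by_cases hiC : i ∈ C
      · exact hyC i hiC
      · rw [hxNC i hiC]
        exact hyNC i (Finset.mem_sdiff.mpr ⟨hiS, hiC⟩)

end Lemmas2

lemma exists_matching {n : ℕ} {B : Type*} (f g : Fin n → B) :
    ∀ (s t : Finset (Fin n)), s.val.map f = t.val.map g →
    ∃ σ : Fin n → Fin n, Set.InjOn σ ↑s ∧ ∀ i ∈ s, σ i ∈ t ∧ f i = g (σ i) := by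
  intro s
  induction s using Finset.cons_induction with
  | empty =>
    intro t h
    exact ⟨id, by simp, by simp⟩
  | cons a s ha ih =>
    intro t h
    rw [Finset.cons_val, Multiset.map_cons] at h
    have hfa : f a ∈ t.val.map g := by rw [← h]; exact Multiset.mem_cons_self _ _
    obtain ⟨b, hb, hgb⟩ := Multiset.mem_map.mp hfa
    have hbt : b ∈ t := hb
    have htval : t.val = b ::ₘ (t.erase b).val := by
      rw [Finset.erase_val]
      exact (Multiset.cons_erase hb).symm
    have ht' : s.val.map f = (t.erase b).val.map g := by
      rw [htval, Multiset.map_cons, hgb] at h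
      exact (Multiset.cons_inj_right _).mp h
    obtain ⟨σ', hinj', hσ'⟩ := ih (t.erase b) ht'
    refine ⟨fun i => if i = a then b else σ' i, ?_, ?_⟩
    · intro i hi j hj hij
      simp only at hij
      by_cases hia : i = a <;> by_cases hja : j = a
      · rw [hia, hja]
      · exfalso
        rw [if_pos hia, if_neg hja] at hij
        have hjs : j ∈ s := (Finset.mem_cons.mp (Finset.mem_coe.mp hj)).resolve_left hja
        have : σ' j ∈ t.erase b := (hσ' j hjs).1
        rw [← hij] at this
        exact Finset.notMem_erase b t this
      · exfalso
        rw [if_neg hia, if_pos hja] at hij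
        have his : i ∈ s := (Finset.mem_cons.mp (Finset.mem_coe.mp hi)).resolve_left hia
        have : σ' i ∈ t.erase b := (hσ' i his).1
        rw [hij] at this
        exact Finset.notMem_erase b t this
      · rw [if_neg hia, if_neg hja] at hij
        have his : i ∈ s := (Finset.mem_cons.mp (Finset.mem_coe.mp hi)).resolve_left hia
        have hjs : j ∈ s := (Finset.mem_cons.mp (Finset.mem_coe.mp hj)).resolve_left hja
        exact hinj' (Finset.mem_coe.mpr his) (Finset.mem_coe.mpr hjs) hij
    · intro i hi
      rcases Finset.mem_cons.mp hi with rfl | his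
      · constructor <;> simp [hbt, hgb]
      · have hia : i ≠ a := fun h => ha (h ▸ his)
        simp only [if_neg hia]
        exact ⟨Finset.mem_of_mem_erase (hσ' i his).1, (hσ' i his).2⟩


/-- on an objective indifferences domain, every `TTC_≻` mechanism is
Pareto efficient. -/
theorem TTCtb_paretoEfficient_objInd {n : ℕ} {H B : Type*} (w : Fin n ≃ H)
    (blk : H → B) (R : Fin n → WeakOrder H) (hR : ∀ i, ObjInd blk (R i))
    (tb : Fin n → Fin n → Fin n → Prop) (htb : ∀ i, IsTieBreak (tb i)) :
    ¬ ∃ y : Fin n ≃ H, ParetoDom R (⇑y) (TTCtb w R tb) := by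
  rintro ⟨y, hrel, i₀, hstrict⟩
  classical
  set pref := fun i => tieBroken w (R i) (tb i) with hpref
  -- basic properties of the tie-broken strict preferences
  have hrefl : ∀ i (a : H), (R i).rel a a := fun i a => ((R i).total a a).elim id id
  have hirr : ∀ i (a : H), ¬ pref i a a := by
    intro i a h
    rcases h with h | ⟨_, h⟩
    · exact h.2 h.1
    · exact (htb i).2.2 _ h
  have hp : ∀ i, Transitive (pref i) := by
    intro i a b c hab hbc
    rcases hab with hab | ⟨hIab, tab⟩ <;> rcases hbc with hbc | ⟨hIbc, tbc⟩
    · exact Or.inl ⟨(R i).trans _ _ _ hab.1 hbc.1,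
        fun h => hbc.2 ((R i).trans _ _ _ h hab.1)⟩
    · exact Or.inl ⟨(R i).trans _ _ _ hab.1 hIbc.1,
        fun h => hab.2 ((R i).trans _ _ _ hIbc.1 h)⟩
    · exact Or.inl ⟨(R i).trans _ _ _ hIab.1 hbc.1,
        fun h => hbc.2 ((R i).trans _ _ _ h hIab.1)⟩
    · exact Or.inr ⟨⟨(R i).trans _ _ _ hIab.1 hIbc.1, (R i).trans _ _ _ hIbc.2 hIab.2⟩,
        (htb i).2.1 tab tbc⟩
  have ht : ∀ i (a b : H), a ≠ b → pref i a b ∨ pref i b a := by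
    intro i a b hab
    have hsymm : w.symm a ≠ w.symm b := fun h => hab (w.symm.injective h)
    rcases (R i).total a b with h | h
    · by_cases h' : (R i).rel b a
      · rcases (htb i).1 (w.symm a) (w.symm b) hsymm with t | t
        · exact Or.inl (Or.inr ⟨⟨h, h'⟩, t⟩)
        · exact Or.inr (Or.inr ⟨⟨h', h⟩, t⟩)
      · exact Or.inl (Or.inl ⟨h, h'⟩)
    · by_cases h' : (R i).rel a b
      · rcases (htb i).1 (w.symm a) (w.symm b) hsymm with t | t
        · exact Or.inl (Or.inr ⟨⟨h', h⟩, t⟩)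
        · exact Or.inr (Or.inr ⟨⟨h, h'⟩, t⟩)
      · exact Or.inr (Or.inl ⟨h, h'⟩)
  -- the TTC allocation
  set x := TTCaux w pref n Finset.univ with hxdef
  have hxd : TTCtb w R tb = x := rfl
  rw [hxd] at hrel hstrict
  have hcard : (Finset.univ : Finset (Fin n)).card ≤ n := by simp
  obtain ⟨hxinj, hxim⟩ := TTCaux_bij w pref hp ht n Finset.univ hcard
  rw [← hxdef] at hxinj hxim
  haveI : Fintype H := Fintype.ofEquiv _ w
  -- the set of strict improvers
  set D := Finset.univ.filter (fun i => blk (y i) ≠ blk (x i)) with hD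
  have hDP : ∀ i ∈ D, (R i).P (y i) (x i) := by
    intro i hi
    have hb := (Finset.mem_filter.mp hi).2
    exact ⟨hrel i, fun h => hb ((hR i (y i) (x i)).mp ⟨hrel i, h⟩)⟩
  have hi₀D : i₀ ∈ D := by
    refine Finset.mem_filter.mpr ⟨Finset.mem_univ _, fun hb => ?_⟩
    exact hstrict.2 ((hR i₀ (y i₀) (x i₀)).mpr hb).2
  -- image facts
  have hyuniv : Finset.univ.image ⇑y = (Finset.univ : Finset H) := by
    ext b
    simp only [Finset.mem_image, Finset.mem_univ, iff_true]
    exact ⟨y.symm b, trivial, y.apply_symm_apply b⟩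
  have hwuniv : Finset.univ.image ⇑w = (Finset.univ : Finset H) := by
    ext b
    simp only [Finset.mem_image, Finset.mem_univ, iff_true]
    exact ⟨w.symm b, trivial, w.apply_symm_apply b⟩
  have hxuniv : Finset.univ.image x = (Finset.univ : Finset H) := by rw [hxim, hwuniv]
  have hyval : Finset.univ.val.map ⇑y = (Finset.univ : Finset H).val := by
    rw [← hyuniv, Finset.image_val_of_injOn (y.injective.injOn)]
  have hxval : Finset.univ.val.map x = (Finset.univ : Finset H).val := by
    rw [← hxuniv, Finset.image_val_of_injOn hxinj]
  -- multiset equality of blocks over D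
  have hM : (D.val.map fun i => blk (y i)) = (D.val.map fun i => blk (x i)) := by
    have h1 : (Finset.univ.val.map fun i => blk (y i))
        = (Finset.univ.val.map fun i => blk (x i)) := by
      have e1 : (Finset.univ.val.map fun i => blk (y i))
          = (Finset.univ.val.map ⇑y).map blk := by rw [Multiset.map_map]; rfl
      have e2 : (Finset.univ.val.map fun i => blk (x i))
          = (Finset.univ.val.map x).map blk := by rw [Multiset.map_map]; rfl
      rw [e1, e2, hyval, hxval]
    set E := Finset.univ.filter (fun i => ¬ blk (y i) ≠ blk (x i)) with hE
    have hsplit : (Finset.univ : Finset (Fin n)).val = D.val + E.val := by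
      rw [hD, hE, Finset.filter_val, Finset.filter_val]
      exact (Multiset.filter_add_not _ _).symm
    have h2 : (E.val.map fun i => blk (y i)) = (E.val.map fun i => blk (x i)) :=
      Multiset.map_congr rfl (fun i hi => not_not.mp (Finset.mem_filter.mp (show i ∈ Finset.univ.filter (fun i => ¬ blk (y i) ≠ blk (x i)) from hi)).2)
    rw [hsplit, Multiset.map_add, Multiset.map_add, h2] at h1
    exact add_right_cancel h1
  obtain ⟨σ, hσinj, hσ⟩ := exists_matching (fun i => blk (y i)) (fun i => blk (x i)) D D hM
  -- the permutation: identity off D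
  set π := fun i => if i ∈ D then σ i else i with hπ
  have hπinj : Function.Injective π := by
    intro i j hij
    simp only [hπ] at hij
    by_cases hiD : i ∈ D <;> by_cases hjD : j ∈ D
    · rw [if_pos hiD, if_pos hjD] at hij
      exact hσinj (Finset.mem_coe.mpr hiD) (Finset.mem_coe.mpr hjD) hij
    · exfalso
      rw [if_pos hiD, if_neg hjD] at hij
      exact hjD (hij ▸ (hσ i hiD).1)
    · exfalso
      rw [if_neg hiD, if_pos hjD] at hij
      have := (hσ j hjD).1
      rw [← hij] at this
      exact hiD this
    · rwa [if_neg hiD, if_neg hjD] at hij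
  set y' := fun i => x (π i) with hy'
  have hy'inj : Set.InjOn y' ↑(Finset.univ : Finset (Fin n)) := by
    intro i _ j _ h
    exact hπinj (hxinj (Finset.mem_coe.mpr (Finset.mem_univ _))
      (Finset.mem_coe.mpr (Finset.mem_univ _)) h)
  have hπim : Finset.univ.image π = Finset.univ := by
    apply Finset.eq_univ_of_card
    rw [Finset.card_image_of_injective _ hπinj, Finset.card_univ]
  have hy'im : Finset.univ.image y' = Finset.univ.image ⇑w := by
    have e : Finset.univ.image y' = (Finset.univ.image π).image x := by
      rw [Finset.image_image]; rfl
    rw [e, hπim, hxim]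
  have hkey : ∀ i ∈ D, pref i (y' i) (x i) := by
    intro i hiD
    have hblk : blk (y i) = blk (x (σ i)) := (hσ i hiD).2
    have hI : (R i).I (y i) (x (σ i)) := (hR i _ _).mpr hblk
    have hPyx := hDP i hiD
    have hP : (R i).P (x (σ i)) (x i) :=
      ⟨(R i).trans _ _ _ hI.2 hPyx.1, fun h => hPyx.2 ((R i).trans _ _ _ h hI.2)⟩
    have e : y' i = x (σ i) := by simp only [hy', hπ, if_pos hiD]
    rw [e]
    exact Or.inl hP
  have hfinal : ∀ i ∈ (Finset.univ : Finset (Fin n)), y' i = x i := by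
    apply TTCaux_opt w pref hp hirr ht n Finset.univ hcard y' hy'inj hy'im
    intro i _
    by_cases hiD : i ∈ D
    · exact Or.inr (hkey i hiD)
    · left
      simp only [hy', hπ, if_neg hiD]
      rfl
  have hi₀ := hfinal i₀ (Finset.mem_univ _)
  have := hkey i₀ hi₀D
  rw [hi₀] at this
  exact hirr i₀ _ this


end ShapleyScarf
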